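/- Let d ≥ 1 be an integer, m > max(0,(d-2)/d), and fix η ∈ (0,1). For α ∈ (0,1) set b_α := α/(2+d(m-1)) and Q_α(η) := (1/Γ(1-α)) ∫_η^1 (1-σ^{1/b_α})^{-α} σ^{1-d} dσ. Then Q_α(η) tends to 1/(2+d(m-1)) as α → 1⁻. -/

import Mathlib

open MeasureTheory Set Filter

private lemma rpow_le_max {t σ r : ℝ} (ht : 0 < t) (h1 : t ≤ σ) (h2 : σ ≤ 1) :
    σ ^ r ≤ max 1 (t ^ r) := by
  rcases le_or_gt 0 r with h | h
  · exact le_max_of_le_left (Real.rpow_le_one (ht.trans_le h1).le h2 h)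
  · exact le_max_of_le_right (Real.rpow_le_rpow_of_nonpos ht h1 h.le)

private lemma min_le_rpow {t σ r : ℝ} (ht : 0 < t) (h1 : t ≤ σ) (h2 : σ ≤ 1) :
    min 1 (t ^ r) ≤ σ ^ r := by
  rcases le_or_gt 0 r with h | h
  · exact min_le_of_right_le (Real.rpow_le_rpow ht.le h1 h)
  · exact min_le_of_left_le (Real.one_le_rpow_of_pos_of_le_one_of_nonpos (ht.trans_le h1) h2 h.le)

private lemma ftc_key {p α s : ℝ} (hp : 0 < p) (hα0 : 0 < α) (hα1 : α < 1)
    (hs0 : 0 < s) (hs1 : s < 1) :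
    IntegrableOn (fun σ => (1 - σ ^ p) ^ (-α) * (p * σ ^ (p - 1))) (Ioo s 1) volume ∧
      ∫ σ in Ioo s 1, (1 - σ ^ p) ^ (-α) * (p * σ ^ (p - 1)) =
        (1 - s ^ p) ^ (1 - α) / (1 - α) := by
  have h1α : (0:ℝ) < 1 - α := by linarith
  set G : ℝ → ℝ := fun σ => -(1 - σ ^ p) ^ (1 - α) / (1 - α) with hG
  have hcont : ContinuousOn G (Icc s 1) := by
    apply ContinuousOn.div_const
    apply ContinuousOn.neg
    apply ContinuousOn.rpow_const
    · exact continuousOn_const.sub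
        (continuousOn_id.rpow_const fun x hx => Or.inl (ne_of_gt (hs0.trans_le hx.1)))
    · exact fun x _ => Or.inr h1α.le
  have hderiv : ∀ σ ∈ Ioo s 1,
      HasDerivAt G ((1 - σ ^ p) ^ (-α) * (p * σ ^ (p - 1))) σ := by
    intro σ hσ
    have hσ0 : 0 < σ := hs0.trans hσ.1
    have hσp : σ ^ p < 1 := Real.rpow_lt_one hσ0.le hσ.2 hp
    have hbase : 0 < 1 - σ ^ p := by linarith
    have h1 : HasDerivAt (fun x : ℝ => 1 - x ^ p) (-(p * σ ^ (p - 1))) σ :=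
      (Real.hasDerivAt_rpow_const (Or.inl hσ0.ne')).const_sub 1
    have h2 : HasDerivAt (fun y : ℝ => y ^ (1 - α))
        ((1 - α) * (1 - σ ^ p) ^ (1 - α - 1)) (1 - σ ^ p) :=
      Real.hasDerivAt_rpow_const (Or.inl hbase.ne')
    have h3 := h2.comp σ h1
    have h4 := h3.neg.div_const (1 - α)
    refine h4.congr_deriv ?_
    rw [show (1:ℝ) - α - 1 = -α by ring]
    field_simp
  have hpos : ∀ σ ∈ Ioo s 1, 0 ≤ (1 - σ ^ p) ^ (-α) * (p * σ ^ (p - 1)) := by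
    intro σ hσ
    have hσ0 : 0 < σ := hs0.trans hσ.1
    have hσp : σ ^ p < 1 := Real.rpow_lt_one hσ0.le hσ.2 hp
    exact mul_nonneg (Real.rpow_nonneg (by linarith) _)
      (mul_nonneg hp.le (Real.rpow_nonneg hσ0.le _))
  have hIoc : IntegrableOn (fun σ => (1 - σ ^ p) ^ (-α) * (p * σ ^ (p - 1))) (Ioc s 1) volume :=
    intervalIntegral.integrableOn_deriv_of_nonneg hcont hderiv hpos
  have hIoo := hIoc.mono_set Ioo_subset_Ioc_self
  refine ⟨hIoo, ?_⟩
  have hii : IntervalIntegrable (fun σ => (1 - σ ^ p) ^ (-α) * (p * σ ^ (p - 1))) volume s 1 :=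
    (intervalIntegrable_iff_integrableOn_Ioc_of_le hs1.le).mpr hIoc
  have hval := intervalIntegral.integral_eq_sub_of_hasDerivAt_of_le hs1.le hcont hderiv hii
  rw [intervalIntegral.integral_of_le hs1.le, integral_Ioc_eq_integral_Ioo] at hval
  rw [hval]
  simp only [hG, Real.one_rpow]
  rw [show (1:ℝ) - 1 = 0 by ring, Real.zero_rpow h1α.ne']
  ring

private lemma integrable_g {p α q t : ℝ} (hp : 0 < p) (hα0 : 0 < α) (hα1 : α < 1)
    (ht0 : 0 < t) (ht1 : t < 1) :
    IntegrableOn (fun σ => (1 - σ ^ p) ^ (-α) * σ ^ q) (Ioo t 1) volume := by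
  have hD := (ftc_key hp hα0 hα1 ht0 ht1).1
  set M : ℝ := max 1 (t ^ (q - p + 1)) with hM
  have hmeas : AEStronglyMeasurable (fun σ => (1 - σ ^ p) ^ (-α) * σ ^ q)
      (volume.restrict (Ioo t 1)) := by
    apply ContinuousOn.aestronglyMeasurable _ measurableSet_Ioo
    apply ContinuousOn.mul
    · apply ContinuousOn.rpow_const
      · exact continuousOn_const.sub
          (continuousOn_id.rpow_const fun x hx => Or.inl (ne_of_gt (ht0.trans hx.1)))
      · intro x hx
        have hxp : x ^ p < 1 := Real.rpow_lt_one (ht0.trans hx.1).le hx.2 hp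
        exact Or.inl (by linarith)
    · exact continuousOn_id.rpow_const fun x hx => Or.inl (ne_of_gt (ht0.trans hx.1))
  apply Integrable.mono' ((hD.const_mul (M / p)))  hmeas
  rw [ae_restrict_iff' measurableSet_Ioo]
  filter_upwards with σ hσ
  have hσ0 : 0 < σ := ht0.trans hσ.1
  have hσp : σ ^ p < 1 := Real.rpow_lt_one hσ0.le hσ.2 hp
  have hb : (0:ℝ) ≤ 1 - σ ^ p := by linarith
  have hgpos : 0 ≤ (1 - σ ^ p) ^ (-α) * σ ^ q :=
    mul_nonneg (Real.rpow_nonneg hb _) (Real.rpow_nonneg hσ0.le _)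
  rw [Real.norm_of_nonneg hgpos]
  have hsplit : σ ^ q = σ ^ (q - p + 1) * σ ^ (p - 1) := by
    rw [← Real.rpow_add hσ0]; ring_nf
  have hle : σ ^ (q - p + 1) ≤ M := rpow_le_max ht0 hσ.1.le hσ.2.le
  calc (1 - σ ^ p) ^ (-α) * σ ^ q
      = (1 - σ ^ p) ^ (-α) * (σ ^ (q - p + 1) * σ ^ (p - 1)) := by rw [hsplit]
    _ ≤ (1 - σ ^ p) ^ (-α) * (M * σ ^ (p - 1)) := by
        apply mul_le_mul_of_nonneg_left _ (Real.rpow_nonneg hb _)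
        exact mul_le_mul_of_nonneg_right hle (Real.rpow_nonneg hσ0.le _)
    _ = M / p * ((1 - σ ^ p) ^ (-α) * (p * σ ^ (p - 1))) := by
        field_simp

private lemma squeeze_aux {c α η s : ℝ} (d : ℕ) (hd : 1 ≤ d) (hc : 0 < c)
    (hα0 : 0 < α) (hα1 : α < 1) (hη0 : 0 < η) (hηs : η < s) (hs1 : s < 1) :
    min 1 (s ^ (2 - (d:ℝ) - c / α)) * (α / c) * (1 - s ^ (c / α)) ^ (1 - α) /
        Real.Gamma (2 - α)
      ≤ (1 / Real.Gamma (1 - α)) *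
          ∫ σ in Ioo η 1, (1 - σ ^ (c / α)) ^ (-α) * σ ^ (1 - (d:ℝ)) ∧
    (1 / Real.Gamma (1 - α)) *
        ∫ σ in Ioo η 1, (1 - σ ^ (c / α)) ^ (-α) * σ ^ (1 - (d:ℝ))
      ≤ ((1 - α) * ((1 - s ^ (c / α)) ^ (-α) * η ^ (1 - (d:ℝ)) * (s - η))
          + max 1 (s ^ (2 - (d:ℝ) - c / α)) * (α / c) * (1 - s ^ (c / α)) ^ (1 - α)) /
          Real.Gamma (2 - α) := by
  have h1α : (0:ℝ) < 1 - α := by linarith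
  have hp : 0 < c / α := div_pos hc hα0
  have hs0 : 0 < s := hη0.trans hηs
  have hd1 : (1:ℝ) ≤ (d:ℝ) := by exact_mod_cast hd
  set g : ℝ → ℝ := fun σ => (1 - σ ^ (c / α)) ^ (-α) * σ ^ (1 - (d:ℝ)) with hgdef
  set D : ℝ → ℝ := fun σ => (1 - σ ^ (c / α)) ^ (-α) * (c / α * σ ^ (c / α - 1)) with hDdef
  have hkey := ftc_key hp hα0 hα1 hs0 hs1
  have hgs : IntegrableOn g (Ioo s 1) volume := integrable_g hp hα0 hα1 hs0 hs1
  have hsp1 : s ^ (c / α) < 1 := Real.rpow_lt_one hs0.le hs1 hp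
  have hgtail : IntegrableOn g (Ioc η s) volume := by
    have hcont : ContinuousOn g (Icc η s) := by
      apply ContinuousOn.mul
      · apply ContinuousOn.rpow_const
        · exact continuousOn_const.sub
            (continuousOn_id.rpow_const fun x hx => Or.inl (ne_of_gt (hη0.trans_le hx.1)))
        · intro x hx
          have : x ^ (c / α) ≤ s ^ (c / α) :=
            Real.rpow_le_rpow (hη0.trans_le hx.1).le hx.2 hp.le
          exact Or.inl (by nlinarith)
      · exact continuousOn_id.rpow_const fun x hx => Or.inl (ne_of_gt (hη0.trans_le hx.1))
    exact (hcont.integrableOn_compact isCompact_Icc).mono_set Ioc_subset_Icc_self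
  have hunion : Ioc η s ∪ Ioo s 1 = Ioo η 1 := Ioc_union_Ioo_eq_Ioo hηs.le hs1
  have hdisj : Disjoint (Ioc η s) (Ioo s 1) := by
    rw [Set.disjoint_left]; rintro x ⟨_, hx⟩ ⟨hx', _⟩; exact absurd hx (not_le.mpr hx')
  have hg_int : IntegrableOn g (Ioo η 1) volume := by
    rw [← hunion]; exact hgtail.union hgs
  have hsplit : ∫ σ in Ioo η 1, g σ = (∫ σ in Ioc η s, g σ) + ∫ σ in Ioo s 1, g σ := by
    rw [← hunion, setIntegral_union hdisj measurableSet_Ioo hgtail hgs]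
  -- pointwise bounds on (s,1)
  have hpt : ∀ σ ∈ Ioo s 1,
      min 1 (s ^ (2 - (d:ℝ) - c / α)) * (α / c) * D σ ≤ g σ ∧
        g σ ≤ max 1 (s ^ (2 - (d:ℝ) - c / α)) * (α / c) * D σ := by
    intro σ hσ
    have hσ0 : 0 < σ := hs0.trans hσ.1
    have hσp : σ ^ (c / α) < 1 := Real.rpow_lt_one hσ0.le hσ.2 hp
    have hb : (0:ℝ) ≤ 1 - σ ^ (c / α) := by linarith
    have hsplitσ : σ ^ (1 - (d:ℝ)) = σ ^ (2 - (d:ℝ) - c / α) * σ ^ (c / α - 1) := by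
      rw [← Real.rpow_add hσ0]; ring_nf
    have hAσ : min 1 (s ^ (2 - (d:ℝ) - c / α)) ≤ σ ^ (2 - (d:ℝ) - c / α) :=
      min_le_rpow hs0 hσ.1.le hσ.2.le
    have hBσ : σ ^ (2 - (d:ℝ) - c / α) ≤ max 1 (s ^ (2 - (d:ℝ) - c / α)) :=
      rpow_le_max hs0 hσ.1.le hσ.2.le
    have hDform : ∀ K : ℝ, K * (α / c) * D σ
        = (1 - σ ^ (c / α)) ^ (-α) * (K * σ ^ (c / α - 1)) := by
      intro K
      simp only [hDdef]
      field_simp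
    constructor
    · rw [hDform, hgdef]
      calc (1 - σ ^ (c / α)) ^ (-α) * (min 1 (s ^ (2 - (d:ℝ) - c / α)) * σ ^ (c / α - 1))
          ≤ (1 - σ ^ (c / α)) ^ (-α) * (σ ^ (2 - (d:ℝ) - c / α) * σ ^ (c / α - 1)) := by
            apply mul_le_mul_of_nonneg_left _ (Real.rpow_nonneg hb _)
            exact mul_le_mul_of_nonneg_right hAσ (Real.rpow_nonneg hσ0.le _)
        _ = (1 - σ ^ (c / α)) ^ (-α) * σ ^ (1 - (d:ℝ)) := by rw [← hsplitσ]
    · rw [hDform, hgdef]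
      calc (1 - σ ^ (c / α)) ^ (-α) * σ ^ (1 - (d:ℝ))
          = (1 - σ ^ (c / α)) ^ (-α) * (σ ^ (2 - (d:ℝ) - c / α) * σ ^ (c / α - 1)) := by
            rw [← hsplitσ]
        _ ≤ (1 - σ ^ (c / α)) ^ (-α) * (max 1 (s ^ (2 - (d:ℝ) - c / α)) * σ ^ (c / α - 1)) := by
            apply mul_le_mul_of_nonneg_left _ (Real.rpow_nonneg hb _)
            exact mul_le_mul_of_nonneg_right hBσ (Real.rpow_nonneg hσ0.le _)
  -- integral bounds on (s,1)
  have hlow_int : min 1 (s ^ (2 - (d:ℝ) - c / α)) * (α / c) *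
      ((1 - s ^ (c / α)) ^ (1 - α) / (1 - α)) ≤ ∫ σ in Ioo s 1, g σ := by
    have h1 : ∫ σ in Ioo s 1, (min 1 (s ^ (2 - (d:ℝ) - c / α)) * (α / c)) * D σ
        ≤ ∫ σ in Ioo s 1, g σ := by
      apply setIntegral_mono_on (hkey.1.const_mul _) hgs measurableSet_Ioo
      intro σ hσ
      simpa [mul_assoc] using (hpt σ hσ).1
    rwa [integral_const_mul, hkey.2] at h1
  have hup_int : (∫ σ in Ioo s 1, g σ) ≤ max 1 (s ^ (2 - (d:ℝ) - c / α)) * (α / c) *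
      ((1 - s ^ (c / α)) ^ (1 - α) / (1 - α)) := by
    have h1 : ∫ σ in Ioo s 1, g σ
        ≤ ∫ σ in Ioo s 1, (max 1 (s ^ (2 - (d:ℝ) - c / α)) * (α / c)) * D σ := by
      apply setIntegral_mono_on hgs (hkey.1.const_mul _) measurableSet_Ioo
      intro σ hσ
      simpa [mul_assoc] using (hpt σ hσ).2
    rwa [integral_const_mul, hkey.2] at h1
  -- tail bounds
  have htail_nonneg : 0 ≤ ∫ σ in Ioc η s, g σ := by
    apply setIntegral_nonneg measurableSet_Ioc
    intro σ hσ
    have hσ0 : 0 < σ := hη0.trans hσ.1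
    have : σ ^ (c / α) ≤ s ^ (c / α) := Real.rpow_le_rpow hσ0.le hσ.2 hp.le
    exact mul_nonneg (Real.rpow_nonneg (by linarith) _) (Real.rpow_nonneg hσ0.le _)
  have htail_le : (∫ σ in Ioc η s, g σ)
      ≤ (s - η) * ((1 - s ^ (c / α)) ^ (-α) * η ^ (1 - (d:ℝ))) := by
    have hconst : IntegrableOn
        (fun _ : ℝ => (1 - s ^ (c / α)) ^ (-α) * η ^ (1 - (d:ℝ))) (Ioc η s) volume :=
      integrableOn_const measure_Ioc_lt_top.ne
    have h1 : (∫ σ in Ioc η s, g σ)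
        ≤ ∫ _ in Ioc η s, (1 - s ^ (c / α)) ^ (-α) * η ^ (1 - (d:ℝ)) := by
      apply setIntegral_mono_on hgtail hconst measurableSet_Ioc
      intro σ hσ
      have hσ0 : 0 < σ := hη0.trans hσ.1
      have hσs : σ ^ (c / α) ≤ s ^ (c / α) := Real.rpow_le_rpow hσ0.le hσ.2 hp.le
      have hb1 : (0:ℝ) < 1 - s ^ (c / α) := by linarith
      apply mul_le_mul
      · exact Real.rpow_le_rpow_of_nonpos hb1 (by linarith) (by linarith)
      · exact Real.rpow_le_rpow_of_nonpos hη0 hσ.1.le (by linarith)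
      · exact Real.rpow_nonneg hσ0.le _
      · exact Real.rpow_nonneg hb1.le _
    calc (∫ σ in Ioc η s, g σ)
        ≤ ∫ _ in Ioc η s, (1 - s ^ (c / α)) ^ (-α) * η ^ (1 - (d:ℝ)) := h1
      _ = (s - η) * ((1 - s ^ (c / α)) ^ (-α) * η ^ (1 - (d:ℝ))) := by
          rw [setIntegral_const, Real.volume_real_Ioc_of_le (by linarith), smul_eq_mul]
  -- Gamma identities
  have hΓpos : 0 < Real.Gamma (1 - α) := Real.Gamma_pos_of_pos h1α
  have hΓ2 : Real.Gamma (2 - α) = (1 - α) * Real.Gamma (1 - α) := by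
    rw [show (2:ℝ) - α = (1 - α) + 1 by ring, Real.Gamma_add_one h1α.ne']
  have hγ : 0 ≤ 1 / Real.Gamma (1 - α) := by positivity
  constructor
  · have hF : min 1 (s ^ (2 - (d:ℝ) - c / α)) * (α / c) *
        ((1 - s ^ (c / α)) ^ (1 - α) / (1 - α)) ≤ ∫ σ in Ioo η 1, g σ := by
      rw [hsplit]
      linarith [hlow_int, htail_nonneg]
    have := mul_le_mul_of_nonneg_left hF hγ
    calc min 1 (s ^ (2 - (d:ℝ) - c / α)) * (α / c) * (1 - s ^ (c / α)) ^ (1 - α) /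
          Real.Gamma (2 - α)
        = (1 / Real.Gamma (1 - α)) * (min 1 (s ^ (2 - (d:ℝ) - c / α)) * (α / c) *
            ((1 - s ^ (c / α)) ^ (1 - α) / (1 - α))) := by
          rw [hΓ2]; field_simp [h1α.ne', hΓpos.ne', hα0.ne', hc.ne']
          all_goals first
          | ring1
          | (ring_nf; tauto)
      _ ≤ (1 / Real.Gamma (1 - α)) * ∫ σ in Ioo η 1, g σ := this
  · have hF : (∫ σ in Ioo η 1, g σ) ≤
        (s - η) * ((1 - s ^ (c / α)) ^ (-α) * η ^ (1 - (d:ℝ)))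
          + max 1 (s ^ (2 - (d:ℝ) - c / α)) * (α / c) *
            ((1 - s ^ (c / α)) ^ (1 - α) / (1 - α)) := by
      rw [hsplit]
      linarith [hup_int, htail_le]
    have h2 := mul_le_mul_of_nonneg_left hF hγ
    calc (1 / Real.Gamma (1 - α)) * ∫ σ in Ioo η 1, g σ
        ≤ (1 / Real.Gamma (1 - α)) *
            ((s - η) * ((1 - s ^ (c / α)) ^ (-α) * η ^ (1 - (d:ℝ)))
              + max 1 (s ^ (2 - (d:ℝ) - c / α)) * (α / c) *
                ((1 - s ^ (c / α)) ^ (1 - α) / (1 - α))) := h2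
      _ = ((1 - α) * ((1 - s ^ (c / α)) ^ (-α) * η ^ (1 - (d:ℝ)) * (s - η))
            + max 1 (s ^ (2 - (d:ℝ) - c / α)) * (α / c) * (1 - s ^ (c / α)) ^ (1 - α)) /
            Real.Gamma (2 - α) := by
          rw [hΓ2]; field_simp [h1α.ne', hΓpos.ne', hα0.ne', hc.ne']
          all_goals first
          | ring1
          | (ring_nf; tauto)

/-- pointwise convergence of the time-fractional kernel profile to the
classical self-similarity constant `b_{1,m} = 1/(2+d(m-1))` as the Caputo order `α → 1⁻`. -/
theorem kernel_limit_alpha_to_one (d : ℕ) (hd : 1 ≤ d) (m : ℝ)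
    (hm : m > max 0 (((d:ℝ) - 2) / d))
    (η : ℝ) (hη : η ∈ Set.Ioo (0:ℝ) 1) :
    Filter.Tendsto
      (fun α : ℝ =>
        (1 / Real.Gamma (1 - α)) *
          ∫ σ in Set.Ioo η 1,
            (1 - σ ^ (1 / (α / (2 + (d:ℝ) * (m - 1))))) ^ (-α) * σ ^ (1 - (d:ℝ)))
      (nhdsWithin 1 (Set.Ioo 0 1))
      (nhds (1 / (2 + (d:ℝ) * (m - 1)))) := by
  obtain ⟨hη0, hη1⟩ := hη
  have hd0 : (0:ℝ) < d := by exact_mod_cast hd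
  set c : ℝ := 2 + (d:ℝ) * (m - 1) with hcdef
  have hm' : ((d:ℝ) - 2) / d < m := lt_of_le_of_lt (le_max_right _ _) hm
  have hc : 0 < c := by
    have h2 : (d:ℝ) - 2 < m * d := (div_lt_iff₀ hd0).mp hm'
    simp only [hcdef]; nlinarith
  simp only [one_div_div]
  rw [Metric.tendsto_nhds]
  intro ε hε
  set l := nhdsWithin (1:ℝ) (Ioo 0 1) with hldef
  -- choose s
  have hcont1 : ContinuousAt (fun x : ℝ => x ^ (2 - (d:ℝ) - c)) 1 :=
    Real.continuousAt_rpow_const 1 _ (Or.inl one_ne_zero)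
  obtain ⟨δ, hδ0, hδ⟩ := Metric.continuousAt_iff.mp hcont1 (c * ε / 2) (by positivity)
  set s : ℝ := max ((1 + η) / 2) (1 - δ / 2) with hsdef
  have hηs : η < s := lt_of_lt_of_le (by linarith) (le_max_left _ _)
  have hs1 : s < 1 := max_lt (by linarith) (by linarith)
  have hs0 : 0 < s := hη0.trans hηs
  have hsδ : dist s 1 < δ := by
    rw [Real.dist_eq, abs_of_nonpos (by linarith)]
    have h1 : 1 - δ / 2 ≤ s := le_max_right _ _
    linarith
  have hsr : |s ^ (2 - (d:ℝ) - c) - 1| < c * ε / 2 := by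
    have h2 := hδ hsδ
    rwa [Real.dist_eq, Real.one_rpow] at h2
  rw [abs_lt] at hsr
  -- basic tendsto facts
  have hl : Tendsto (fun α : ℝ => α) l (nhds 1) :=
    tendsto_id.mono_left nhdsWithin_le_nhds
  have tca : Tendsto (fun α : ℝ => c / α) l (nhds c) := by
    have h := (tendsto_const_nhds : Tendsto (fun _ : ℝ => c) l (nhds c)).div hl one_ne_zero
    rwa [div_one] at h
  have texp : Tendsto (fun α : ℝ => 2 - (d:ℝ) - c / α) l (nhds (2 - (d:ℝ) - c)) :=
    tendsto_const_nhds.sub tca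
  have tsr : Tendsto (fun α : ℝ => s ^ (2 - (d:ℝ) - c / α)) l (nhds (s ^ (2 - (d:ℝ) - c))) :=
    Filter.Tendsto.rpow tendsto_const_nhds texp (Or.inl hs0.ne')
  have tmin : Tendsto (fun α : ℝ => min 1 (s ^ (2 - (d:ℝ) - c / α))) l
      (nhds (min 1 (s ^ (2 - (d:ℝ) - c)))) := tendsto_const_nhds.min tsr
  have tmax : Tendsto (fun α : ℝ => max 1 (s ^ (2 - (d:ℝ) - c / α))) l
      (nhds (max 1 (s ^ (2 - (d:ℝ) - c)))) := tendsto_const_nhds.max tsr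
  have tsp : Tendsto (fun α : ℝ => s ^ (c / α)) l (nhds (s ^ c)) :=
    Filter.Tendsto.rpow tendsto_const_nhds tca (Or.inl hs0.ne')
  have hsc1 : s ^ c < 1 := Real.rpow_lt_one hs0.le hs1 hc
  have hsc0 : (0:ℝ) < 1 - s ^ c := by linarith
  have tbase : Tendsto (fun α : ℝ => 1 - s ^ (c / α)) l (nhds (1 - s ^ c)) :=
    tendsto_const_nhds.sub tsp
  have hz : Tendsto (fun α : ℝ => 1 - α) l (nhds 0) := by
    have h := (tendsto_const_nhds : Tendsto (fun _ : ℝ => (1:ℝ)) l (nhds 1)).sub hl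
    norm_num at h; exact h
  have tpow1 : Tendsto (fun α : ℝ => (1 - s ^ (c / α)) ^ (1 - α)) l (nhds 1) := by
    have h1 := Filter.Tendsto.rpow tbase hz (Or.inl hsc0.ne')
    simpa using h1
  have tpow2 : Tendsto (fun α : ℝ => (1 - s ^ (c / α)) ^ (-α)) l (nhds ((1 - s ^ c) ^ (-1:ℝ))) :=
    Filter.Tendsto.rpow tbase hl.neg (Or.inl hsc0.ne')
  have tGamma : Tendsto (fun α : ℝ => Real.Gamma (2 - α)) l (nhds 1) := by
    have hΓcont : ContinuousAt Real.Gamma 1 := by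
      refine (Real.differentiableAt_Gamma fun n => ?_).continuousAt
      have : (0:ℝ) ≤ (n:ℝ) := Nat.cast_nonneg n
      exact ne_of_gt (by linarith)
    have h21 : Tendsto (fun α : ℝ => 2 - α) l (nhds 1) := by
      have h := (tendsto_const_nhds : Tendsto (fun _ : ℝ => (2:ℝ)) l (nhds 2)).sub hl
      norm_num at h; exact h
    have := hΓcont.tendsto.comp h21
    rwa [Real.Gamma_one] at this
  -- limits of the two bounds
  have tLo : Tendsto (fun α : ℝ =>
      min 1 (s ^ (2 - (d:ℝ) - c / α)) * (α / c) * (1 - s ^ (c / α)) ^ (1 - α) /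
        Real.Gamma (2 - α)) l (nhds (min 1 (s ^ (2 - (d:ℝ) - c)) / c)) := by
    have h1 := ((tmin.mul (hl.div_const c)).mul tpow1).div tGamma one_ne_zero
    have : min 1 (s ^ (2 - (d:ℝ) - c)) * (1 / c) * 1 / 1 = min 1 (s ^ (2 - (d:ℝ) - c)) / c := by
      ring
    rwa [this] at h1
  have tUp : Tendsto (fun α : ℝ =>
      ((1 - α) * ((1 - s ^ (c / α)) ^ (-α) * η ^ (1 - (d:ℝ)) * (s - η))
        + max 1 (s ^ (2 - (d:ℝ) - c / α)) * (α / c) * (1 - s ^ (c / α)) ^ (1 - α)) /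
        Real.Gamma (2 - α)) l (nhds (max 1 (s ^ (2 - (d:ℝ) - c)) / c)) := by
    have hK1 : Tendsto (fun _ : ℝ => η ^ (1 - (d:ℝ))) l (nhds (η ^ (1 - (d:ℝ)))) :=
      tendsto_const_nhds
    have hK2 : Tendsto (fun _ : ℝ => s - η) l (nhds (s - η)) := tendsto_const_nhds
    have h1 := ((hz.mul ((tpow2.mul hK1).mul hK2)).add
      ((tmax.mul (hl.div_const c)).mul tpow1)).div tGamma one_ne_zero
    have heq : (0 * ((1 - s ^ c) ^ (-1:ℝ) * η ^ (1 - (d:ℝ)) * (s - η))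
        + max 1 (s ^ (2 - (d:ℝ) - c)) * (1 / c) * 1) / 1
        = max 1 (s ^ (2 - (d:ℝ) - c)) / c := by ring
    rwa [heq] at h1
  -- eventual bounds
  have hAbound : 1 / c - ε < min 1 (s ^ (2 - (d:ℝ) - c)) / c := by
    rw [sub_lt_iff_lt_add, div_lt_iff₀ hc, add_mul, div_mul_cancel₀ _ hc.ne']
    have h1 : 1 - c * ε / 2 < min 1 (s ^ (2 - (d:ℝ) - c)) := by
      apply lt_min (by nlinarith)
      nlinarith [hsr.1]
    nlinarith [min_le_left (1:ℝ) (s ^ (2 - (d:ℝ) - c))]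
  have hBbound : max 1 (s ^ (2 - (d:ℝ) - c)) / c < 1 / c + ε := by
    rw [div_lt_iff₀ hc, add_mul, div_mul_cancel₀ _ hc.ne']
    apply max_lt (by nlinarith)
    nlinarith [hsr.2]
  have hev1 : ∀ᶠ α in l, 1 / c - ε <
      min 1 (s ^ (2 - (d:ℝ) - c / α)) * (α / c) * (1 - s ^ (c / α)) ^ (1 - α) /
        Real.Gamma (2 - α) := tLo.eventually_const_lt hAbound
  have hev2 : ∀ᶠ α in l,
      ((1 - α) * ((1 - s ^ (c / α)) ^ (-α) * η ^ (1 - (d:ℝ)) * (s - η))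
        + max 1 (s ^ (2 - (d:ℝ) - c / α)) * (α / c) * (1 - s ^ (c / α)) ^ (1 - α)) /
        Real.Gamma (2 - α) < 1 / c + ε := tUp.eventually_lt_const hBbound
  have hev3 : ∀ᶠ α in l, α ∈ Ioo (0:ℝ) 1 := self_mem_nhdsWithin
  filter_upwards [hev1, hev2, hev3] with α h1 h2 h3
  obtain ⟨hα0, hα1⟩ := h3
  obtain ⟨hlo, hup⟩ := squeeze_aux d hd hc hα0 hα1 hη0 hηs hs1
  rw [Real.dist_eq, abs_lt]
  constructor <;> [linarith; linarith]
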